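/- Let q ∈ ℝ with q ∉ {0, 1, −1}. The assignments a ↦ d, b ↦ −qc, c ↦ −q⁻¹b, d ↦ a, θ⁰ ↦ −θ⁰, θ¹ ↦ −θ², θ² ↦ −θ¹ extend to a well-defined conjugate-linear anti-homomorphism * : M_q^I → M_q^II (i.e., (xy)* = y* x* and (λx)* = λ̄ x* for λ ∈ ℂ), and the map M_q^II → M_q^I defined by the same assignments is its two-sided inverse; in particular * is bijective. Thus the *-involution interchanges the type-I and type-II quantum algebras. -/

import Mathlib

open scoped TensorProduct

noncomputable section
set_option synthInstance.maxHeartbeats 1000000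
set_option maxHeartbeats 1000000

/-- The free ℂ-algebra on the generators `a, b, c, d, θ⁰, θ¹, θ²`. -/
abbrev F7 : Type := FreeAlgebra ℂ (Fin 7)

/-- The generators: `a = g 0`, `b = g 1`, `c = g 2`, `d = g 3`, `θ⁰ = g 4`, `θ¹ = g 5`,
`θ² = g 6`. -/
def g (i : Fin 7) : F7 := FreeAlgebra.ι ℂ i

/-- The defining relations of the quantum algebra (type I). -/
inductive RelI (q : ℂ) : F7 → F7 → Prop
  | rel_ab : RelI q (g 0 * g 1) (q • (g 1 * g 0))
  | rel_ac : RelI q (g 0 * g 2) (q • (g 2 * g 0))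
  | rel_bc : RelI q (g 1 * g 2) (g 2 * g 1)
  | rel_bd : RelI q (g 1 * g 3) (q • (g 3 * g 1))
  | rel_cd : RelI q (g 2 * g 3) (q • (g 3 * g 2))
  | rel_adda : RelI q (g 0 * g 3 - g 3 * g 0) ((q - q⁻¹) • (g 1 * g 2))
  | rel_det : RelI q (g 0 * g 3 - q • (g 1 * g 2)) 1
  | rel_t0a : RelI q (g 4 * g 0) (g 0 * g 4 + (q ^ 2 * (q - q⁻¹)) • (g 2 * g 5))
  | rel_t1a : RelI q (g 5 * g 0) (q⁻¹ • (g 0 * g 5))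
  | rel_t2a : RelI q (g 6 * g 0) (q • (g 0 * g 6) - ((q - q⁻¹) * (q + q⁻¹)) • (g 2 * g 4))
  | rel_t0b : RelI q (g 4 * g 1) (g 1 * g 4 + (q ^ 2 * (q - q⁻¹)) • (g 3 * g 5))
  | rel_t1b : RelI q (g 5 * g 1) (q⁻¹ • (g 1 * g 5))
  | rel_t2b : RelI q (g 6 * g 1) (q • (g 1 * g 6) - ((q - q⁻¹) * (q + q⁻¹)) • (g 3 * g 4))
  | rel_t0c : RelI q (g 4 * g 2) (g 2 * g 4)
  | rel_t1c : RelI q (g 5 * g 2) (q • (g 2 * g 5))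
  | rel_t2c : RelI q (g 6 * g 2) (q⁻¹ • (g 2 * g 6))
  | rel_t0d : RelI q (g 4 * g 3) (g 3 * g 4)
  | rel_t1d : RelI q (g 5 * g 3) (q • (g 3 * g 5))
  | rel_t2d : RelI q (g 6 * g 3) (q⁻¹ • (g 3 * g 6))
  | rel_th00 : RelI q (g 4 * g 4) ((q ^ 2 * (q - q⁻¹) / (q + q⁻¹)) • (g 5 * g 6))
  | rel_th11 : RelI q (g 5 * g 5) 0
  | rel_th22 : RelI q (g 6 * g 6) 0
  | rel_th12 : RelI q (g 5 * g 6) (-(g 6 * g 5))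
  | rel_th10 : RelI q (g 5 * g 4) ((-(q ^ 2)⁻¹) • (g 4 * g 5))
  | rel_th20 : RelI q (g 6 * g 4) ((-(q ^ 2)) • (g 4 * g 6))

/-- The type-I quantum algebra. -/
abbrev MqI (q : ℂ) : Type := RingQuot (RelI q)

def mkI (q : ℂ) : F7 →ₐ[ℂ] MqI q := RingQuot.mkAlgHom ℂ (RelI q)

def aI (q : ℂ) : MqI q := mkI q (g 0)
def bI (q : ℂ) : MqI q := mkI q (g 1)
def cI (q : ℂ) : MqI q := mkI q (g 2)
def dI (q : ℂ) : MqI q := mkI q (g 3)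
def t0I (q : ℂ) : MqI q := mkI q (g 4)
def t1I (q : ℂ) : MqI q := mkI q (g 5)
def t2I (q : ℂ) : MqI q := mkI q (g 6)

/-- The defining relations of the quantum algebra (type II). -/
inductive RelII (q : ℂ) : F7 → F7 → Prop
  | rel_ab : RelII q (g 0 * g 1) (q • (g 1 * g 0))
  | rel_ac : RelII q (g 0 * g 2) (q • (g 2 * g 0))
  | rel_bc : RelII q (g 1 * g 2) (g 2 * g 1)
  | rel_bd : RelII q (g 1 * g 3) (q • (g 3 * g 1))
  | rel_cd : RelII q (g 2 * g 3) (q • (g 3 * g 2))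
  | rel_adda : RelII q (g 0 * g 3 - g 3 * g 0) ((q - q⁻¹) • (g 1 * g 2))
  | rel_det : RelII q (g 0 * g 3 - q • (g 1 * g 2)) 1
  | rel_t0a : RelII q (g 4 * g 0) (g 0 * g 4)
  | rel_t1a : RelII q (g 5 * g 0) (q • (g 0 * g 5))
  | rel_t2a : RelII q (g 6 * g 0) (q⁻¹ • (g 0 * g 6))
  | rel_t0b : RelII q (g 4 * g 1) (g 1 * g 4)
  | rel_t1b : RelII q (g 5 * g 1) (q • (g 1 * g 5))
  | rel_t2b : RelII q (g 6 * g 1) (q⁻¹ • (g 1 * g 6))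
  | rel_t0c : RelII q (g 4 * g 2) (g 2 * g 4 + (q - q⁻¹) • (g 0 * g 6))
  | rel_t1c : RelII q (g 5 * g 2) (q⁻¹ • (g 2 * g 5) - ((q - q⁻¹) * (q + q⁻¹) / q ^ 2) • (g 0 * g 4))
  | rel_t2c : RelII q (g 6 * g 2) (q • (g 2 * g 6))
  | rel_t0d : RelII q (g 4 * g 3) (g 3 * g 4 + (q - q⁻¹) • (g 1 * g 6))
  | rel_t1d : RelII q (g 5 * g 3) (q⁻¹ • (g 3 * g 5) - ((q - q⁻¹) * (q + q⁻¹) / q ^ 2) • (g 1 * g 4))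
  | rel_t2d : RelII q (g 6 * g 3) (q • (g 3 * g 6))
  | rel_th00 : RelII q (g 4 * g 4) ((q ^ 2 * (q - q⁻¹) / (q + q⁻¹)) • (g 5 * g 6))
  | rel_th11 : RelII q (g 5 * g 5) 0
  | rel_th22 : RelII q (g 6 * g 6) 0
  | rel_th12 : RelII q (g 5 * g 6) (-(g 6 * g 5))
  | rel_th10 : RelII q (g 5 * g 4) ((-(q ^ 2)⁻¹) • (g 4 * g 5))
  | rel_th20 : RelII q (g 6 * g 4) ((-(q ^ 2)) • (g 4 * g 6))

/-- The type-II quantum algebra. -/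
abbrev MqII (q : ℂ) : Type := RingQuot (RelII q)

def mkII (q : ℂ) : F7 →ₐ[ℂ] MqII q := RingQuot.mkAlgHom ℂ (RelII q)

def aII (q : ℂ) : MqII q := mkII q (g 0)
def bII (q : ℂ) : MqII q := mkII q (g 1)
def cII (q : ℂ) : MqII q := mkII q (g 2)
def dII (q : ℂ) : MqII q := mkII q (g 3)
def t0II (q : ℂ) : MqII q := mkII q (g 4)
def t1II (q : ℂ) : MqII q := mkII q (g 5)
def t2II (q : ℂ) : MqII q := mkII q (g 6)

/-! ### Auxiliary: conjugated algebra structure -/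

def Cj (A : Type) : Type := A
def Cj.of {A : Type} : A → Cj A := id
def Cj.un {A : Type} : Cj A → A := id

instance {A : Type} [Ring A] : Ring (Cj A) := inferInstanceAs (Ring A)

instance {A : Type} [Ring A] [Algebra ℂ A] : Algebra ℂ (Cj A) :=
  RingHom.toAlgebra' ((algebraMap ℂ A).comp (starRingEnd ℂ))
    (fun z x => Algebra.commutes ((starRingEnd ℂ) z) (Cj.un x))

lemma Cj.un_smul {A : Type} [Ring A] [Algebra ℂ A] (z : ℂ) (y : Cj A) :
    Cj.un (z • y) = (starRingEnd ℂ) z • Cj.un y := by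
  rw [Algebra.smul_def, Algebra.smul_def]; rfl

/-! ### star on F7 is ℂ-linear -/

lemma starF_smul (z : ℂ) (x : F7) : star (z • x) = z • star x := by
  rw [Algebra.smul_def, star_mul, FreeAlgebra.star_algebraMap, ← Algebra.commutes,
    ← Algebra.smul_def]

/-! ### generator images -/

def imgII (q : ℂ) : Fin 7 → MqII q
  | ⟨0, _⟩ => dII q
  | ⟨1, _⟩ => -(q • cII q)
  | ⟨2, _⟩ => -(q⁻¹ • bII q)
  | ⟨3, _⟩ => aII q
  | ⟨4, _⟩ => -(t0II q)
  | ⟨5, _⟩ => -(t2II q)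
  | ⟨6, _⟩ => -(t1II q)

def imgI (q : ℂ) : Fin 7 → MqI q
  | ⟨0, _⟩ => dI q
  | ⟨1, _⟩ => -(q • cI q)
  | ⟨2, _⟩ => -(q⁻¹ • bI q)
  | ⟨3, _⟩ => aI q
  | ⟨4, _⟩ => -(t0I q)
  | ⟨5, _⟩ => -(t2I q)
  | ⟨6, _⟩ => -(t1I q)

def psiII (q : ℂ) : F7 →ₐ[ℂ] Cj (MqII q) := FreeAlgebra.lift ℂ (fun i => Cj.of (imgII q i))
def psiI (q : ℂ) : F7 →ₐ[ℂ] Cj (MqI q) := FreeAlgebra.lift ℂ (fun i => Cj.of (imgI q i))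

def stF (q : ℂ) : F7 → MqII q := fun x => Cj.un (psiII q (star x))
def tsF (q : ℂ) : F7 → MqI q := fun x => Cj.un (psiI q (star x))

variable {q : ℂ}

lemma stF_mul (x y : F7) : stF q (x * y) = stF q y * stF q x := by
  rw [stF, star_mul, map_mul]; rfl
lemma stF_add (x y : F7) : stF q (x + y) = stF q x + stF q y := by
  rw [stF, star_add, map_add]; rfl
lemma stF_sub (x y : F7) : stF q (x - y) = stF q x - stF q y := by
  rw [stF, star_sub, map_sub]; rfl
lemma stF_smul (z : ℂ) (x : F7) : stF q (z • x) = (starRingEnd ℂ) z • stF q x := by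
  rw [stF, starF_smul, map_smul, Cj.un_smul]; rfl
lemma stF_one : stF q 1 = 1 := by rw [stF, star_one, map_one]; rfl
lemma stF_zero : stF q 0 = 0 := by rw [stF, star_zero, map_zero]; rfl
lemma stF_algebraMap (z : ℂ) :
    stF q (algebraMap ℂ F7 z) = algebraMap ℂ (MqII q) ((starRingEnd ℂ) z) := by
  rw [stF, FreeAlgebra.star_algebraMap, AlgHom.commutes]; rfl
lemma stF_g (i : Fin 7) : stF q (g i) = imgII q i := by
  rw [stF, g, FreeAlgebra.star_ι, psiII, FreeAlgebra.lift_ι_apply]; rfl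

lemma tsF_mul (x y : F7) : tsF q (x * y) = tsF q y * tsF q x := by
  rw [tsF, star_mul, map_mul]; rfl
lemma tsF_add (x y : F7) : tsF q (x + y) = tsF q x + tsF q y := by
  rw [tsF, star_add, map_add]; rfl
lemma tsF_sub (x y : F7) : tsF q (x - y) = tsF q x - tsF q y := by
  rw [tsF, star_sub, map_sub]; rfl
lemma tsF_smul (z : ℂ) (x : F7) : tsF q (z • x) = (starRingEnd ℂ) z • tsF q x := by
  rw [tsF, starF_smul, map_smul, Cj.un_smul]; rfl
lemma tsF_one : tsF q 1 = 1 := by rw [tsF, star_one, map_one]; rfl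
lemma tsF_zero : tsF q 0 = 0 := by rw [tsF, star_zero, map_zero]; rfl
lemma tsF_algebraMap (z : ℂ) :
    tsF q (algebraMap ℂ F7 z) = algebraMap ℂ (MqI q) ((starRingEnd ℂ) z) := by
  rw [tsF, FreeAlgebra.star_algebraMap, AlgHom.commutes]; rfl
lemma tsF_g (i : Fin 7) : tsF q (g i) = imgI q i := by
  rw [tsF, g, FreeAlgebra.star_ι, psiI, FreeAlgebra.lift_ι_apply]; rfl

lemma negII (v : MqII q) : -v = (-1 : ℂ) • v := (neg_one_smul ℂ v).symm
lemma subII (u v : MqII q) : u - v = u + (-1 : ℂ) • v :=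
  (sub_eq_add_neg u v).trans (congrArg (u + ·) (neg_one_smul ℂ v).symm)
lemma negI (v : MqI q) : -v = (-1 : ℂ) • v := (neg_one_smul ℂ v).symm
lemma subI (u v : MqI q) : u - v = u + (-1 : ℂ) • v :=
  (sub_eq_add_neg u v).trans (congrArg (u + ·) (neg_one_smul ℂ v).symm)

lemma stF_neg (x : F7) : stF q (-x) = -stF q x := by rw [stF, star_neg, map_neg]; rfl
lemma tsF_neg (x : F7) : tsF q (-x) = -tsF q x := by rw [tsF, star_neg, map_neg]; rfl
/-! ### value lemmas for the images -/
lemma imgII_0 : imgII q 0 = dII q := rfl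
lemma imgII_1 : imgII q 1 = -(q • cII q) := rfl
lemma imgII_2 : imgII q 2 = -(q⁻¹ • bII q) := rfl
lemma imgII_3 : imgII q 3 = aII q := rfl
lemma imgII_4 : imgII q 4 = -(t0II q) := rfl
lemma imgII_5 : imgII q 5 = -(t2II q) := rfl
lemma imgII_6 : imgII q 6 = -(t1II q) := rfl
lemma imgI_0 : imgI q 0 = dI q := rfl
lemma imgI_1 : imgI q 1 = -(q • cI q) := rfl
lemma imgI_2 : imgI q 2 = -(q⁻¹ • bI q) := rfl
lemma imgI_3 : imgI q 3 = aI q := rfl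
lemma imgI_4 : imgI q 4 = -(t0I q) := rfl
lemma imgI_5 : imgI q 5 = -(t2I q) := rfl
lemma imgI_6 : imgI q 6 = -(t1I q) := rfl

/-! ### relations in MqII -/
lemma II_ab : aII q * bII q = q • (bII q * aII q) := by
  simpa only [map_mul, map_smul, map_sub, map_add, map_one, map_zero, map_neg, aII, bII, cII, dII, t0II, t1II, t2II, mkII]
    using RingQuot.mkAlgHom_rel ℂ (RelII.rel_ab (q := q))
lemma II_ac : aII q * cII q = q • (cII q * aII q) := by
  simpa only [map_mul, map_smul, map_sub, map_add, map_one, map_zero, map_neg, aII, bII, cII, dII, t0II, t1II, t2II, mkII]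
    using RingQuot.mkAlgHom_rel ℂ (RelII.rel_ac (q := q))
lemma II_bc : bII q * cII q = cII q * bII q := by
  simpa only [map_mul, map_smul, map_sub, map_add, map_one, map_zero, map_neg, aII, bII, cII, dII, t0II, t1II, t2II, mkII]
    using RingQuot.mkAlgHom_rel ℂ (RelII.rel_bc (q := q))
lemma II_bd : bII q * dII q = q • (dII q * bII q) := by
  simpa only [map_mul, map_smul, map_sub, map_add, map_one, map_zero, map_neg, aII, bII, cII, dII, t0II, t1II, t2II, mkII]
    using RingQuot.mkAlgHom_rel ℂ (RelII.rel_bd (q := q))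
lemma II_cd : cII q * dII q = q • (dII q * cII q) := by
  simpa only [map_mul, map_smul, map_sub, map_add, map_one, map_zero, map_neg, aII, bII, cII, dII, t0II, t1II, t2II, mkII]
    using RingQuot.mkAlgHom_rel ℂ (RelII.rel_cd (q := q))
lemma II_adda : aII q * dII q - dII q * aII q = (q - q⁻¹) • (bII q * cII q) := by
  simpa only [map_mul, map_smul, map_sub, map_add, map_one, map_zero, map_neg, aII, bII, cII, dII, t0II, t1II, t2II, mkII]
    using RingQuot.mkAlgHom_rel ℂ (RelII.rel_adda (q := q))
lemma II_det : aII q * dII q - q • (bII q * cII q) = 1 := by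
  simpa only [map_mul, map_smul, map_sub, map_add, map_one, map_zero, map_neg, aII, bII, cII, dII, t0II, t1II, t2II, mkII]
    using RingQuot.mkAlgHom_rel ℂ (RelII.rel_det (q := q))
lemma II_t0a : t0II q * aII q = aII q * t0II q := by
  simpa only [map_mul, map_smul, map_sub, map_add, map_one, map_zero, map_neg, aII, bII, cII, dII, t0II, t1II, t2II, mkII]
    using RingQuot.mkAlgHom_rel ℂ (RelII.rel_t0a (q := q))
lemma II_t1a : t1II q * aII q = q • (aII q * t1II q) := by
  simpa only [map_mul, map_smul, map_sub, map_add, map_one, map_zero, map_neg, aII, bII, cII, dII, t0II, t1II, t2II, mkII]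
    using RingQuot.mkAlgHom_rel ℂ (RelII.rel_t1a (q := q))
lemma II_t2a : t2II q * aII q = q⁻¹ • (aII q * t2II q) := by
  simpa only [map_mul, map_smul, map_sub, map_add, map_one, map_zero, map_neg, aII, bII, cII, dII, t0II, t1II, t2II, mkII]
    using RingQuot.mkAlgHom_rel ℂ (RelII.rel_t2a (q := q))
lemma II_t0b : t0II q * bII q = bII q * t0II q := by
  simpa only [map_mul, map_smul, map_sub, map_add, map_one, map_zero, map_neg, aII, bII, cII, dII, t0II, t1II, t2II, mkII]
    using RingQuot.mkAlgHom_rel ℂ (RelII.rel_t0b (q := q))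
lemma II_t1b : t1II q * bII q = q • (bII q * t1II q) := by
  simpa only [map_mul, map_smul, map_sub, map_add, map_one, map_zero, map_neg, aII, bII, cII, dII, t0II, t1II, t2II, mkII]
    using RingQuot.mkAlgHom_rel ℂ (RelII.rel_t1b (q := q))
lemma II_t2b : t2II q * bII q = q⁻¹ • (bII q * t2II q) := by
  simpa only [map_mul, map_smul, map_sub, map_add, map_one, map_zero, map_neg, aII, bII, cII, dII, t0II, t1II, t2II, mkII]
    using RingQuot.mkAlgHom_rel ℂ (RelII.rel_t2b (q := q))
lemma II_t0c : t0II q * cII q = cII q * t0II q + (q - q⁻¹) • (aII q * t2II q) := by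
  simpa only [map_mul, map_smul, map_sub, map_add, map_one, map_zero, map_neg, aII, bII, cII, dII, t0II, t1II, t2II, mkII]
    using RingQuot.mkAlgHom_rel ℂ (RelII.rel_t0c (q := q))
lemma II_t1c : t1II q * cII q
    = q⁻¹ • (cII q * t1II q) - ((q - q⁻¹) * (q + q⁻¹) / q ^ 2) • (aII q * t0II q) := by
  simpa only [map_mul, map_smul, map_sub, map_add, map_one, map_zero, map_neg, aII, bII, cII, dII, t0II, t1II, t2II, mkII]
    using RingQuot.mkAlgHom_rel ℂ (RelII.rel_t1c (q := q))
lemma II_t2c : t2II q * cII q = q • (cII q * t2II q) := by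
  simpa only [map_mul, map_smul, map_sub, map_add, map_one, map_zero, map_neg, aII, bII, cII, dII, t0II, t1II, t2II, mkII]
    using RingQuot.mkAlgHom_rel ℂ (RelII.rel_t2c (q := q))
lemma II_t0d : t0II q * dII q = dII q * t0II q + (q - q⁻¹) • (bII q * t2II q) := by
  simpa only [map_mul, map_smul, map_sub, map_add, map_one, map_zero, map_neg, aII, bII, cII, dII, t0II, t1II, t2II, mkII]
    using RingQuot.mkAlgHom_rel ℂ (RelII.rel_t0d (q := q))
lemma II_t1d : t1II q * dII q
    = q⁻¹ • (dII q * t1II q) - ((q - q⁻¹) * (q + q⁻¹) / q ^ 2) • (bII q * t0II q) := by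
  simpa only [map_mul, map_smul, map_sub, map_add, map_one, map_zero, map_neg, aII, bII, cII, dII, t0II, t1II, t2II, mkII]
    using RingQuot.mkAlgHom_rel ℂ (RelII.rel_t1d (q := q))
lemma II_t2d : t2II q * dII q = q • (dII q * t2II q) := by
  simpa only [map_mul, map_smul, map_sub, map_add, map_one, map_zero, map_neg, aII, bII, cII, dII, t0II, t1II, t2II, mkII]
    using RingQuot.mkAlgHom_rel ℂ (RelII.rel_t2d (q := q))
lemma II_th00 : t0II q * t0II q = (q ^ 2 * (q - q⁻¹) / (q + q⁻¹)) • (t1II q * t2II q) := by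
  simpa only [map_mul, map_smul, map_sub, map_add, map_one, map_zero, map_neg, aII, bII, cII, dII, t0II, t1II, t2II, mkII]
    using RingQuot.mkAlgHom_rel ℂ (RelII.rel_th00 (q := q))
lemma II_th11 : t1II q * t1II q = 0 := by
  simpa only [map_mul, map_smul, map_sub, map_add, map_one, map_zero, map_neg, aII, bII, cII, dII, t0II, t1II, t2II, mkII]
    using RingQuot.mkAlgHom_rel ℂ (RelII.rel_th11 (q := q))
lemma II_th22 : t2II q * t2II q = 0 := by
  simpa only [map_mul, map_smul, map_sub, map_add, map_one, map_zero, map_neg, aII, bII, cII, dII, t0II, t1II, t2II, mkII]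
    using RingQuot.mkAlgHom_rel ℂ (RelII.rel_th22 (q := q))
lemma II_th12 : t1II q * t2II q = -(t2II q * t1II q) := by
  simpa only [map_mul, map_smul, map_sub, map_add, map_one, map_zero, map_neg, aII, bII, cII, dII, t0II, t1II, t2II, mkII]
    using RingQuot.mkAlgHom_rel ℂ (RelII.rel_th12 (q := q))
lemma II_th10 : t1II q * t0II q = (-(q ^ 2)⁻¹) • (t0II q * t1II q) := by
  simpa only [map_mul, map_smul, map_sub, map_add, map_one, map_zero, map_neg, aII, bII, cII, dII, t0II, t1II, t2II, mkII]
    using RingQuot.mkAlgHom_rel ℂ (RelII.rel_th10 (q := q))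
lemma II_th20 : t2II q * t0II q = (-(q ^ 2)) • (t0II q * t2II q) := by
  simpa only [map_mul, map_smul, map_sub, map_add, map_one, map_zero, map_neg, aII, bII, cII, dII, t0II, t1II, t2II, mkII]
    using RingQuot.mkAlgHom_rel ℂ (RelII.rel_th20 (q := q))

lemma II_ad : aII q * dII q = q • (cII q * bII q) + 1 := by
  have h := II_det (q := q)
  have h2 : aII q * dII q = q • (bII q * cII q) + 1 := by rw [← h]; abel
  rw [h2, II_bc]
lemma II_da : dII q * aII q = q⁻¹ • (cII q * bII q) + 1 := by
  have h1 := II_adda (q := q)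
  have h3 : dII q * aII q = aII q * dII q - (q - q⁻¹) • (bII q * cII q) := by rw [← h1]; abel
  rw [h3, II_ad, II_bc]
  module
/-! ### relations in MqI -/
lemma I_ab : aI q * bI q = q • (bI q * aI q) := by
  simpa only [map_mul, map_smul, map_sub, map_add, map_one, map_zero, map_neg, aI, bI, cI, dI, t0I, t1I, t2I, mkI]
    using RingQuot.mkAlgHom_rel ℂ (RelI.rel_ab (q := q))
lemma I_ac : aI q * cI q = q • (cI q * aI q) := by
  simpa only [map_mul, map_smul, map_sub, map_add, map_one, map_zero, map_neg, aI, bI, cI, dI, t0I, t1I, t2I, mkI]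
    using RingQuot.mkAlgHom_rel ℂ (RelI.rel_ac (q := q))
lemma I_bc : bI q * cI q = cI q * bI q := by
  simpa only [map_mul, map_smul, map_sub, map_add, map_one, map_zero, map_neg, aI, bI, cI, dI, t0I, t1I, t2I, mkI]
    using RingQuot.mkAlgHom_rel ℂ (RelI.rel_bc (q := q))
lemma I_bd : bI q * dI q = q • (dI q * bI q) := by
  simpa only [map_mul, map_smul, map_sub, map_add, map_one, map_zero, map_neg, aI, bI, cI, dI, t0I, t1I, t2I, mkI]
    using RingQuot.mkAlgHom_rel ℂ (RelI.rel_bd (q := q))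
lemma I_cd : cI q * dI q = q • (dI q * cI q) := by
  simpa only [map_mul, map_smul, map_sub, map_add, map_one, map_zero, map_neg, aI, bI, cI, dI, t0I, t1I, t2I, mkI]
    using RingQuot.mkAlgHom_rel ℂ (RelI.rel_cd (q := q))
lemma I_adda : aI q * dI q - dI q * aI q = (q - q⁻¹) • (bI q * cI q) := by
  simpa only [map_mul, map_smul, map_sub, map_add, map_one, map_zero, map_neg, aI, bI, cI, dI, t0I, t1I, t2I, mkI]
    using RingQuot.mkAlgHom_rel ℂ (RelI.rel_adda (q := q))
lemma I_det : aI q * dI q - q • (bI q * cI q) = 1 := by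
  simpa only [map_mul, map_smul, map_sub, map_add, map_one, map_zero, map_neg, aI, bI, cI, dI, t0I, t1I, t2I, mkI]
    using RingQuot.mkAlgHom_rel ℂ (RelI.rel_det (q := q))
lemma I_t0a : t0I q * aI q = aI q * t0I q + (q ^ 2 * (q - q⁻¹)) • (cI q * t1I q) := by
  simpa only [map_mul, map_smul, map_sub, map_add, map_one, map_zero, map_neg, aI, bI, cI, dI, t0I, t1I, t2I, mkI]
    using RingQuot.mkAlgHom_rel ℂ (RelI.rel_t0a (q := q))
lemma I_t1a : t1I q * aI q = q⁻¹ • (aI q * t1I q) := by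
  simpa only [map_mul, map_smul, map_sub, map_add, map_one, map_zero, map_neg, aI, bI, cI, dI, t0I, t1I, t2I, mkI]
    using RingQuot.mkAlgHom_rel ℂ (RelI.rel_t1a (q := q))
lemma I_t2a : t2I q * aI q = q • (aI q * t2I q) - ((q - q⁻¹) * (q + q⁻¹)) • (cI q * t0I q) := by
  simpa only [map_mul, map_smul, map_sub, map_add, map_one, map_zero, map_neg, aI, bI, cI, dI, t0I, t1I, t2I, mkI]
    using RingQuot.mkAlgHom_rel ℂ (RelI.rel_t2a (q := q))
lemma I_t0b : t0I q * bI q = bI q * t0I q + (q ^ 2 * (q - q⁻¹)) • (dI q * t1I q) := by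
  simpa only [map_mul, map_smul, map_sub, map_add, map_one, map_zero, map_neg, aI, bI, cI, dI, t0I, t1I, t2I, mkI]
    using RingQuot.mkAlgHom_rel ℂ (RelI.rel_t0b (q := q))
lemma I_t1b : t1I q * bI q = q⁻¹ • (bI q * t1I q) := by
  simpa only [map_mul, map_smul, map_sub, map_add, map_one, map_zero, map_neg, aI, bI, cI, dI, t0I, t1I, t2I, mkI]
    using RingQuot.mkAlgHom_rel ℂ (RelI.rel_t1b (q := q))
lemma I_t2b : t2I q * bI q = q • (bI q * t2I q) - ((q - q⁻¹) * (q + q⁻¹)) • (dI q * t0I q) := by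
  simpa only [map_mul, map_smul, map_sub, map_add, map_one, map_zero, map_neg, aI, bI, cI, dI, t0I, t1I, t2I, mkI]
    using RingQuot.mkAlgHom_rel ℂ (RelI.rel_t2b (q := q))
lemma I_t0c : t0I q * cI q = cI q * t0I q := by
  simpa only [map_mul, map_smul, map_sub, map_add, map_one, map_zero, map_neg, aI, bI, cI, dI, t0I, t1I, t2I, mkI]
    using RingQuot.mkAlgHom_rel ℂ (RelI.rel_t0c (q := q))
lemma I_t1c : t1I q * cI q = q • (cI q * t1I q) := by
  simpa only [map_mul, map_smul, map_sub, map_add, map_one, map_zero, map_neg, aI, bI, cI, dI, t0I, t1I, t2I, mkI]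
    using RingQuot.mkAlgHom_rel ℂ (RelI.rel_t1c (q := q))
lemma I_t2c : t2I q * cI q = q⁻¹ • (cI q * t2I q) := by
  simpa only [map_mul, map_smul, map_sub, map_add, map_one, map_zero, map_neg, aI, bI, cI, dI, t0I, t1I, t2I, mkI]
    using RingQuot.mkAlgHom_rel ℂ (RelI.rel_t2c (q := q))
lemma I_t0d : t0I q * dI q = dI q * t0I q := by
  simpa only [map_mul, map_smul, map_sub, map_add, map_one, map_zero, map_neg, aI, bI, cI, dI, t0I, t1I, t2I, mkI]
    using RingQuot.mkAlgHom_rel ℂ (RelI.rel_t0d (q := q))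
lemma I_t1d : t1I q * dI q = q • (dI q * t1I q) := by
  simpa only [map_mul, map_smul, map_sub, map_add, map_one, map_zero, map_neg, aI, bI, cI, dI, t0I, t1I, t2I, mkI]
    using RingQuot.mkAlgHom_rel ℂ (RelI.rel_t1d (q := q))
lemma I_t2d : t2I q * dI q = q⁻¹ • (dI q * t2I q) := by
  simpa only [map_mul, map_smul, map_sub, map_add, map_one, map_zero, map_neg, aI, bI, cI, dI, t0I, t1I, t2I, mkI]
    using RingQuot.mkAlgHom_rel ℂ (RelI.rel_t2d (q := q))
lemma I_th00 : t0I q * t0I q = (q ^ 2 * (q - q⁻¹) / (q + q⁻¹)) • (t1I q * t2I q) := by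
  simpa only [map_mul, map_smul, map_sub, map_add, map_one, map_zero, map_neg, aI, bI, cI, dI, t0I, t1I, t2I, mkI]
    using RingQuot.mkAlgHom_rel ℂ (RelI.rel_th00 (q := q))
lemma I_th11 : t1I q * t1I q = 0 := by
  simpa only [map_mul, map_smul, map_sub, map_add, map_one, map_zero, map_neg, aI, bI, cI, dI, t0I, t1I, t2I, mkI]
    using RingQuot.mkAlgHom_rel ℂ (RelI.rel_th11 (q := q))
lemma I_th22 : t2I q * t2I q = 0 := by
  simpa only [map_mul, map_smul, map_sub, map_add, map_one, map_zero, map_neg, aI, bI, cI, dI, t0I, t1I, t2I, mkI]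
    using RingQuot.mkAlgHom_rel ℂ (RelI.rel_th22 (q := q))
lemma I_th12 : t1I q * t2I q = -(t2I q * t1I q) := by
  simpa only [map_mul, map_smul, map_sub, map_add, map_one, map_zero, map_neg, aI, bI, cI, dI, t0I, t1I, t2I, mkI]
    using RingQuot.mkAlgHom_rel ℂ (RelI.rel_th12 (q := q))
lemma I_th10 : t1I q * t0I q = (-(q ^ 2)⁻¹) • (t0I q * t1I q) := by
  simpa only [map_mul, map_smul, map_sub, map_add, map_one, map_zero, map_neg, aI, bI, cI, dI, t0I, t1I, t2I, mkI]
    using RingQuot.mkAlgHom_rel ℂ (RelI.rel_th10 (q := q))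
lemma I_th20 : t2I q * t0I q = (-(q ^ 2)) • (t0I q * t2I q) := by
  simpa only [map_mul, map_smul, map_sub, map_add, map_one, map_zero, map_neg, aI, bI, cI, dI, t0I, t1I, t2I, mkI]
    using RingQuot.mkAlgHom_rel ℂ (RelI.rel_th20 (q := q))

lemma I_ad : aI q * dI q = q • (cI q * bI q) + 1 := by
  have h := I_det (q := q)
  have h2 : aI q * dI q = q • (bI q * cI q) + 1 := by rw [← h]; abel
  rw [h2, I_bc]
lemma I_da : dI q * aI q = q⁻¹ • (cI q * bI q) + 1 := by
  have h1 := I_adda (q := q)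
  have h3 : dI q * aI q = aI q * dI q - (q - q⁻¹) • (bI q * cI q) := by rw [← h1]; abel
  rw [h3, I_ad, I_bc]
  module
lemma hrelI (hqr : (starRingEnd ℂ) q = q) (hq0 : q ≠ 0) (hql : q + q⁻¹ ≠ 0) :
    ∀ ⦃x y : F7⦄, RelI q x y → stF q x = stF q y := by
  intro x y h
  cases h <;>
    simp only [stF_mul, stF_add, stF_sub, stF_neg, stF_smul, stF_one, stF_zero, stF_g,
      imgII_0, imgII_1, imgII_2, imgII_3, imgII_4, imgII_5, imgII_6,
      map_sub, map_mul, map_add, map_pow, map_inv₀, map_div₀, map_one, map_neg, map_ofNat, hqr,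
      negII, subII, smul_mul_assoc, mul_smul_comm, smul_smul,
      mul_one, one_mul, zero_mul, mul_zero, smul_zero, smul_add, mul_add, add_mul,
      II_ab, II_ac, II_bc, II_bd, II_cd, II_ad, II_da,
      II_t0a, II_t1a, II_t2a, II_t0b, II_t1b, II_t2b, II_t0c, II_t1c, II_t2c,
      II_t0d, II_t1d, II_t2d, II_th00, II_th11, II_th22, II_th12, II_th10, II_th20] <;>
    match_scalars <;>
    (try field_simp) <;> (try ring_nf) <;> (try field_simp) <;> (try ring)

lemma hrelII (hqr : (starRingEnd ℂ) q = q) (hq0 : q ≠ 0) (hql : q + q⁻¹ ≠ 0) :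
    ∀ ⦃x y : F7⦄, RelII q x y → tsF q x = tsF q y := by
  intro x y h
  cases h <;>
    simp only [tsF_mul, tsF_add, tsF_sub, tsF_neg, tsF_smul, tsF_one, tsF_zero, tsF_g,
      imgI_0, imgI_1, imgI_2, imgI_3, imgI_4, imgI_5, imgI_6,
      map_sub, map_mul, map_add, map_pow, map_inv₀, map_div₀, map_one, map_neg, map_ofNat, hqr,
      negI, subI, smul_mul_assoc, mul_smul_comm, smul_smul,
      mul_one, one_mul, zero_mul, mul_zero, smul_zero, smul_add, mul_add, add_mul,
      I_ab, I_ac, I_bc, I_bd, I_cd, I_ad, I_da,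
      I_t0a, I_t1a, I_t2a, I_t0b, I_t1b, I_t2b, I_t0c, I_t1c, I_t2c,
      I_t0d, I_t1d, I_t2d, I_th00, I_th11, I_th22, I_th12, I_th10, I_th20] <;>
    match_scalars <;>
    (try field_simp) <;> (try ring_nf) <;> (try field_simp) <;> (try ring)
/-! ### bundling into ring homomorphisms on the quotients -/

def stHomF (q : ℂ) : F7 →+* (Cj (MqII q))ᵐᵒᵖ :=
  (RingHom.op (psiII q).toRingHom).comp (starRingEquiv (R := F7)).toRingHom

def tsHomF (q : ℂ) : F7 →+* (Cj (MqI q))ᵐᵒᵖ :=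
  (RingHom.op (psiI q).toRingHom).comp (starRingEquiv (R := F7)).toRingHom

lemma stHomF_apply (x : F7) : stHomF q x = MulOpposite.op (psiII q (star x)) := rfl
lemma tsHomF_apply (x : F7) : tsHomF q x = MulOpposite.op (psiI q (star x)) := rfl

variable (hqr : (starRingEnd ℂ) q = q) (hq0 : q ≠ 0) (hql : q + q⁻¹ ≠ 0)

def stQ : MqI q →+* (Cj (MqII q))ᵐᵒᵖ :=
  RingQuot.lift ⟨stHomF q, fun x y h => congrArg MulOpposite.op (hrelI hqr hq0 hql h)⟩

def tsQ : MqII q →+* (Cj (MqI q))ᵐᵒᵖ :=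
  RingQuot.lift ⟨tsHomF q, fun x y h => congrArg MulOpposite.op (hrelII hqr hq0 hql h)⟩

def stMap : MqI q → MqII q := fun m => Cj.un (MulOpposite.unop (stQ hqr hq0 hql m))
def tsMap : MqII q → MqI q := fun m => Cj.un (MulOpposite.unop (tsQ hqr hq0 hql m))

lemma st_mk (x : F7) : stMap hqr hq0 hql (mkI q x) = stF q x := by
  have h : mkI q x = RingQuot.mkRingHom (RelI q) x := by
    rw [mkI, ← RingQuot.mkAlgHom_coe ℂ (RelI q)]; rfl
  simp only [stMap, stQ, h, RingQuot.lift_mkRingHom_apply]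
  exact congrArg (fun z => Cj.un (MulOpposite.unop z)) (RingQuot.lift_mkRingHom_apply (stHomF q) _ x)

lemma ts_mk (x : F7) : tsMap hqr hq0 hql (mkII q x) = tsF q x := by
  have h : mkII q x = RingQuot.mkRingHom (RelII q) x := by
    rw [mkII, ← RingQuot.mkAlgHom_coe ℂ (RelII q)]; rfl
  simp only [tsMap, tsQ, h, RingQuot.lift_mkRingHom_apply]
  exact congrArg (fun z => Cj.un (MulOpposite.unop z)) (RingQuot.lift_mkRingHom_apply (tsHomF q) _ x)

lemma st_add (x y : MqI q) :
    stMap hqr hq0 hql (x + y) = stMap hqr hq0 hql x + stMap hqr hq0 hql y := by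
  simp only [stMap, map_add, MulOpposite.unop_add]; rfl
lemma st_mul (x y : MqI q) :
    stMap hqr hq0 hql (x * y) = stMap hqr hq0 hql y * stMap hqr hq0 hql x := by
  simp only [stMap, map_mul, MulOpposite.unop_mul]; rfl
lemma st_one : stMap (q := q) hqr hq0 hql 1 = 1 := by
  simp only [stMap, map_one, MulOpposite.unop_one]; rfl
lemma st_neg (x : MqI q) : stMap hqr hq0 hql (-x) = -stMap hqr hq0 hql x := by
  simp only [stMap, map_neg, MulOpposite.unop_neg]; rfl
lemma st_alg (z : ℂ) :
    stMap (q := q) hqr hq0 hql (algebraMap ℂ (MqI q) z)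
      = algebraMap ℂ (MqII q) ((starRingEnd ℂ) z) := by
  have h : algebraMap ℂ (MqI q) z = mkI q (algebraMap ℂ F7 z) := ((mkI q).commutes z).symm
  rw [h, st_mk, stF_algebraMap]
lemma st_smul (z : ℂ) (x : MqI q) :
    stMap hqr hq0 hql (z • x) = (starRingEnd ℂ) z • stMap hqr hq0 hql x := by
  rw [Algebra.smul_def, st_mul, st_alg, ← Algebra.commutes, ← Algebra.smul_def]

lemma ts_add (x y : MqII q) :
    tsMap hqr hq0 hql (x + y) = tsMap hqr hq0 hql x + tsMap hqr hq0 hql y := by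
  simp only [tsMap, map_add, MulOpposite.unop_add]; rfl
lemma ts_mul (x y : MqII q) :
    tsMap hqr hq0 hql (x * y) = tsMap hqr hq0 hql y * tsMap hqr hq0 hql x := by
  simp only [tsMap, map_mul, MulOpposite.unop_mul]; rfl
lemma ts_one : tsMap (q := q) hqr hq0 hql 1 = 1 := by
  simp only [tsMap, map_one, MulOpposite.unop_one]; rfl
lemma ts_neg (x : MqII q) : tsMap hqr hq0 hql (-x) = -tsMap hqr hq0 hql x := by
  simp only [tsMap, map_neg, MulOpposite.unop_neg]; rfl
lemma ts_alg (z : ℂ) :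
    tsMap (q := q) hqr hq0 hql (algebraMap ℂ (MqII q) z)
      = algebraMap ℂ (MqI q) ((starRingEnd ℂ) z) := by
  have h : algebraMap ℂ (MqII q) z = mkII q (algebraMap ℂ F7 z) := ((mkII q).commutes z).symm
  rw [h, ts_mk, tsF_algebraMap]
lemma ts_smul (z : ℂ) (x : MqII q) :
    tsMap hqr hq0 hql (z • x) = (starRingEnd ℂ) z • tsMap hqr hq0 hql x := by
  rw [Algebra.smul_def, ts_mul, ts_alg, ← Algebra.commutes, ← Algebra.smul_def]

/-! ### values on the generators -/

lemma st_aI : stMap (q := q) hqr hq0 hql (aI q) = dII q := (st_mk hqr hq0 hql (g 0)).trans (stF_g 0)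
lemma st_bI : stMap (q := q) hqr hq0 hql (bI q) = -(q • cII q) :=
  (st_mk hqr hq0 hql (g 1)).trans (stF_g 1)
lemma st_cI : stMap (q := q) hqr hq0 hql (cI q) = -(q⁻¹ • bII q) :=
  (st_mk hqr hq0 hql (g 2)).trans (stF_g 2)
lemma st_dI : stMap (q := q) hqr hq0 hql (dI q) = aII q := (st_mk hqr hq0 hql (g 3)).trans (stF_g 3)
lemma st_t0I : stMap (q := q) hqr hq0 hql (t0I q) = -(t0II q) :=
  (st_mk hqr hq0 hql (g 4)).trans (stF_g 4)
lemma st_t1I : stMap (q := q) hqr hq0 hql (t1I q) = -(t2II q) :=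
  (st_mk hqr hq0 hql (g 5)).trans (stF_g 5)
lemma st_t2I : stMap (q := q) hqr hq0 hql (t2I q) = -(t1II q) :=
  (st_mk hqr hq0 hql (g 6)).trans (stF_g 6)

lemma ts_aII : tsMap (q := q) hqr hq0 hql (aII q) = dI q := (ts_mk hqr hq0 hql (g 0)).trans (tsF_g 0)
lemma ts_bII : tsMap (q := q) hqr hq0 hql (bII q) = -(q • cI q) :=
  (ts_mk hqr hq0 hql (g 1)).trans (tsF_g 1)
lemma ts_cII : tsMap (q := q) hqr hq0 hql (cII q) = -(q⁻¹ • bI q) :=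
  (ts_mk hqr hq0 hql (g 2)).trans (tsF_g 2)
lemma ts_dII : tsMap (q := q) hqr hq0 hql (dII q) = aI q := (ts_mk hqr hq0 hql (g 3)).trans (tsF_g 3)
lemma ts_t0II : tsMap (q := q) hqr hq0 hql (t0II q) = -(t0I q) :=
  (ts_mk hqr hq0 hql (g 4)).trans (tsF_g 4)
lemma ts_t1II : tsMap (q := q) hqr hq0 hql (t1II q) = -(t2I q) :=
  (ts_mk hqr hq0 hql (g 5)).trans (tsF_g 5)
lemma ts_t2II : tsMap (q := q) hqr hq0 hql (t2II q) = -(t1I q) :=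
  (ts_mk hqr hq0 hql (g 6)).trans (tsF_g 6)

/-! ### the two maps are mutually inverse -/

lemma ts_st (x : MqI q) : tsMap hqr hq0 hql (stMap hqr hq0 hql x) = x := by
  obtain ⟨x, rfl⟩ := RingQuot.mkAlgHom_surjective ℂ (RelI q) x
  show tsMap hqr hq0 hql (stMap hqr hq0 hql (mkI q x)) = mkI q x
  induction x using FreeAlgebra.induction with
  | grade0 r =>
    rw [show mkI q (algebraMap ℂ F7 r) = algebraMap ℂ (MqI q) r from (mkI q).commutes r,
      st_alg, ts_alg, Complex.conj_conj]
  | grade1 i =>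
    show tsMap hqr hq0 hql (stMap hqr hq0 hql (mkI q (g i))) = mkI q (g i)
    rw [st_mk, stF_g]
    fin_cases i
    · exact (ts_mk hqr hq0 hql (g 3)).trans (tsF_g 3)
    · show tsMap hqr hq0 hql (-(q • cII q)) = mkI q (g 1)
      rw [ts_neg, ts_smul, hqr, ts_cII, smul_neg, neg_neg, smul_smul, mul_inv_cancel₀ hq0,
        one_smul]
      rfl
    · show tsMap hqr hq0 hql (-(q⁻¹ • bII q)) = mkI q (g 2)
      rw [ts_neg, ts_smul, map_inv₀, hqr, ts_bII, smul_neg, neg_neg, smul_smul,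
        inv_mul_cancel₀ hq0, one_smul]
      rfl
    · exact (ts_mk hqr hq0 hql (g 0)).trans (tsF_g 0)
    · show tsMap hqr hq0 hql (-(t0II q)) = mkI q (g 4)
      rw [ts_neg, ts_t0II, neg_neg]
      rfl
    · show tsMap hqr hq0 hql (-(t2II q)) = mkI q (g 5)
      rw [ts_neg, ts_t2II, neg_neg]
      rfl
    · show tsMap hqr hq0 hql (-(t1II q)) = mkI q (g 6)
      rw [ts_neg, ts_t1II, neg_neg]
      rfl
  | mul a b ha hb => rw [map_mul, st_mul, ts_mul, ha, hb]
  | add a b ha hb => rw [map_add, st_add, ts_add, ha, hb]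

lemma st_ts (x : MqII q) : stMap hqr hq0 hql (tsMap hqr hq0 hql x) = x := by
  obtain ⟨x, rfl⟩ := RingQuot.mkAlgHom_surjective ℂ (RelII q) x
  show stMap hqr hq0 hql (tsMap hqr hq0 hql (mkII q x)) = mkII q x
  induction x using FreeAlgebra.induction with
  | grade0 r =>
    rw [show mkII q (algebraMap ℂ F7 r) = algebraMap ℂ (MqII q) r from (mkII q).commutes r,
      ts_alg, st_alg, Complex.conj_conj]
  | grade1 i =>
    show stMap hqr hq0 hql (tsMap hqr hq0 hql (mkII q (g i))) = mkII q (g i)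
    rw [ts_mk, tsF_g]
    fin_cases i
    · exact (st_mk hqr hq0 hql (g 3)).trans (stF_g 3)
    · show stMap hqr hq0 hql (-(q • cI q)) = mkII q (g 1)
      rw [st_neg, st_smul, hqr, st_cI, smul_neg, neg_neg, smul_smul, mul_inv_cancel₀ hq0,
        one_smul]
      rfl
    · show stMap hqr hq0 hql (-(q⁻¹ • bI q)) = mkII q (g 2)
      rw [st_neg, st_smul, map_inv₀, hqr, st_bI, smul_neg, neg_neg, smul_smul,
        inv_mul_cancel₀ hq0, one_smul]
      rfl
    · exact (st_mk hqr hq0 hql (g 0)).trans (stF_g 0)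
    · show stMap hqr hq0 hql (-(t0I q)) = mkII q (g 4)
      rw [st_neg, st_t0I, neg_neg]
      rfl
    · show stMap hqr hq0 hql (-(t2I q)) = mkII q (g 5)
      rw [st_neg, st_t2I, neg_neg]
      rfl
    · show stMap hqr hq0 hql (-(t1I q)) = mkII q (g 6)
      rw [st_neg, st_t1I, neg_neg]
      rfl
  | mul a b ha hb => rw [map_mul, ts_mul, st_mul, ha, hb]
  | add a b ha hb => rw [map_add, ts_add, st_add, ha, hb]

/-- For real `q ∉ {0, 1, −1}`, the assignments
`a ↦ d`, `b ↦ −qc`, `c ↦ −q⁻¹b`, `d ↦ a`, `θ⁰ ↦ −θ⁰`, `θ¹ ↦ −θ²`, `θ² ↦ −θ¹`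
extend to a conjugate-linear anti-homomorphism `* : M_q^I → M_q^II`, the map
`M_q^II → M_q^I` given by the same assignments is its two-sided inverse, and in particular
`*` is bijective: the `*`-involution interchanges the type-I and type-II quantum
algebras. -/
theorem star_involution_swaps_types (q : ℝ) (hq0 : q ≠ 0) (hq1 : q ≠ 1) (hqm1 : q ≠ -1) :
    ∃ (st : MqI (q : ℂ) → MqII (q : ℂ)) (ts : MqII (q : ℂ) → MqI (q : ℂ)),
      (∀ x y, st (x + y) = st x + st y) ∧
      (∀ (z : ℂ) (x), st (z • x) = (starRingEnd ℂ z) • st x) ∧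
      (∀ x y, st (x * y) = st y * st x) ∧
      st 1 = 1 ∧
      st (aI (q : ℂ)) = dII (q : ℂ) ∧
      st (bI (q : ℂ)) = -((q : ℂ) • cII (q : ℂ)) ∧
      st (cI (q : ℂ)) = -((q : ℂ)⁻¹ • bII (q : ℂ)) ∧
      st (dI (q : ℂ)) = aII (q : ℂ) ∧
      st (t0I (q : ℂ)) = -(t0II (q : ℂ)) ∧
      st (t1I (q : ℂ)) = -(t2II (q : ℂ)) ∧
      st (t2I (q : ℂ)) = -(t1II (q : ℂ)) ∧
      (∀ x y, ts (x + y) = ts x + ts y) ∧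
      (∀ (z : ℂ) (x), ts (z • x) = (starRingEnd ℂ z) • ts x) ∧
      (∀ x y, ts (x * y) = ts y * ts x) ∧
      ts 1 = 1 ∧
      ts (aII (q : ℂ)) = dI (q : ℂ) ∧
      ts (bII (q : ℂ)) = -((q : ℂ) • cI (q : ℂ)) ∧
      ts (cII (q : ℂ)) = -((q : ℂ)⁻¹ • bI (q : ℂ)) ∧
      ts (dII (q : ℂ)) = aI (q : ℂ) ∧
      ts (t0II (q : ℂ)) = -(t0I (q : ℂ)) ∧
      ts (t1II (q : ℂ)) = -(t2I (q : ℂ)) ∧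
      ts (t2II (q : ℂ)) = -(t1I (q : ℂ)) ∧
      (∀ x, ts (st x) = x) ∧ (∀ y, st (ts y) = y) := by

  have hqr : (starRingEnd ℂ) (q : ℂ) = q := Complex.conj_ofReal q
  have hq0c : (q : ℂ) ≠ 0 := Complex.ofReal_ne_zero.mpr hq0
  have hqlr : q + q⁻¹ ≠ 0 := by
    intro h
    have h2 : q * (q + q⁻¹) = q ^ 2 + 1 := by field_simp
    rw [h, mul_zero] at h2
    nlinarith [sq_nonneg q]
  have hql : (q : ℂ) + (q : ℂ)⁻¹ ≠ 0 := by
    have h : ((q : ℂ) + (q : ℂ)⁻¹) = ((q + q⁻¹ : ℝ) : ℂ) := by push_cast; ring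
    rw [h]
    exact Complex.ofReal_ne_zero.mpr hqlr
  exact ⟨stMap hqr hq0c hql, tsMap hqr hq0c hql,
    st_add hqr hq0c hql, st_smul hqr hq0c hql, st_mul hqr hq0c hql, st_one hqr hq0c hql,
    st_aI hqr hq0c hql, st_bI hqr hq0c hql, st_cI hqr hq0c hql, st_dI hqr hq0c hql,
    st_t0I hqr hq0c hql, st_t1I hqr hq0c hql, st_t2I hqr hq0c hql,
    ts_add hqr hq0c hql, ts_smul hqr hq0c hql, ts_mul hqr hq0c hql, ts_one hqr hq0c hql,
    ts_aII hqr hq0c hql, ts_bII hqr hq0c hql, ts_cII hqr hq0c hql, ts_dII hqr hq0c hql,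
    ts_t0II hqr hq0c hql, ts_t1II hqr hq0c hql, ts_t2II hqr hq0c hql,
    ts_st hqr hq0c hql, st_ts hqr hq0c hql⟩
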